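/- Consider the sequence w^k := u^k(1,·) on (0,1) obeying the recursion w^{k+1} − w^k − (τ/2)∂_{yy}(w^{k+1} − w^k) = −2w^k with (w^{k+1} − w^k)|_{y=0,1} = 0 and w^0 = 0. Then w^k = 0 for all k ≥ 0. Consequently, in the 2D Peaceman–Rachford direction-splitting scheme with zero initial velocity trace, the velocity iterates satisfy the full Dirichlet boundary condition u^k|_{∂Ω} = 0 at all integer time steps, even though the half-step boundary condition is only imposed at x = 0,1. -/

import Mathlib

open Set

lemma key (τ : ℝ) (hτ : 0 < τ) (v : ℝ → ℝ) (hv : ContDiff ℝ 2 v)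
    (hode : ∀ y ∈ Set.Icc (0 : ℝ) 1, deriv (deriv v) y = (2 / τ) * v y)
    (hv0 : v 0 = 0) (hv1 : v 1 = 0) :
    ∀ y ∈ Set.Icc (0 : ℝ) 1, v y ≤ 0 := by
  intro y hy
  by_contra h
  push_neg at h
  obtain ⟨c, hc, hmax⟩ := isCompact_Icc.exists_isMaxOn ⟨y, hy⟩ hv.continuous.continuousOn
  have hvc : 0 < v c := lt_of_lt_of_le h (hmax hy)
  have hc0 : (0 : ℝ) < c := by
    rcases lt_or_eq_of_le hc.1 with h' | h'
    · exact h'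
    · exfalso; rw [← h', hv0] at hvc; exact lt_irrefl _ hvc
  have hc1 : c < 1 := by
    rcases lt_or_eq_of_le hc.2 with h' | h'
    · exact h'
    · exfalso; rw [h', hv1] at hvc; exact lt_irrefl _ hvc
  have hloc : IsLocalMax v c := hmax.isLocalMax (Icc_mem_nhds hc0 hc1)
  have hd0 : deriv v c = 0 := hloc.deriv_eq_zero
  have hcd : ContDiff ℝ 1 (deriv v) := by
    have := (contDiff_succ_iff_deriv (n := 1)).mp (by exact_mod_cast hv)
    exact this.2.2
  have hdd : HasDerivAt (deriv v) (deriv (deriv v) c) c :=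
    ((hcd.differentiable one_ne_zero) c).hasDerivAt
  have hL : 0 < deriv (deriv v) c := by
    rw [hode c ⟨hc0.le, hc1.le⟩]; positivity
  have hs := hasDerivAt_iff_tendsto_slope.mp hdd
  have ev : ∀ᶠ z in nhdsWithin c {c}ᶜ, 0 < slope (deriv v) c z :=
    hs.eventually (eventually_gt_nhds hL)
  have ev' : ∀ᶠ z in nhdsWithin c (Ioi c), 0 < deriv v z := by
    have h1 : ∀ᶠ z in nhdsWithin c (Ioi c), 0 < slope (deriv v) c z :=
      ev.filter_mono (nhdsWithin_mono c (fun z hz => ne_of_gt hz))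
    have h2 : ∀ᶠ z in nhdsWithin c (Ioi c), z ∈ Ioi c := self_mem_nhdsWithin
    filter_upwards [h1, h2] with z hz1 hz2
    have : slope (deriv v) c z = deriv v z / (z - c) := by
      rw [slope_def_field, hd0, div_eq_div_iff (sub_ne_zero.mpr (ne_of_gt hz2))
        (sub_ne_zero.mpr (ne_of_gt hz2))]
      ring
    rw [this] at hz1
    have hzc : 0 < z - c := sub_pos.mpr hz2
    exact (div_pos_iff.mp hz1).resolve_right (fun ⟨_, h⟩ => absurd hzc (not_lt.mpr h.le)) |>.1
  obtain ⟨u, hu, hsub⟩ := mem_nhdsGT_iff_exists_Ioo_subset.mp ev'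
  set b := min u 1 with hb
  have hcb : c < b := lt_min hu hc1
  have hmono : StrictMonoOn v (Icc c b) := by
    apply strictMonoOn_of_deriv_pos (convex_Icc c b) hv.continuous.continuousOn
    intro x hx
    rw [interior_Icc] at hx
    exact hsub ⟨hx.1, lt_of_lt_of_le hx.2 (min_le_left _ _)⟩
  have hlt : v c < v b := hmono (left_mem_Icc.mpr hcb.le) (right_mem_Icc.mpr hcb.le) hcb
  have hble : v b ≤ v c := hmax ⟨le_trans hc0.le (le_of_lt hcb), min_le_right _ _⟩
  exact absurd hlt (not_lt.mpr hble)

/-- The boundary traces `w^k = u^k(1,·)` of the 2D Peaceman–Rachford direction-splitting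
scheme obey `w^{k+1} − w^k − (τ/2)∂_{yy}(w^{k+1} − w^k) = −2w^k` with
`(w^{k+1} − w^k)|_{y=0,1} = 0` and `w⁰ = 0`; hence `w^k = 0` for all `k`, i.e. the
velocity iterates satisfy the full Dirichlet boundary condition at integer time steps. -/
theorem stmt8 (τ : ℝ) (hτ : 0 < τ) (w : ℕ → ℝ → ℝ)
    (hw : ∀ k, ContDiff ℝ 2 (w k))
    (hbc : ∀ k, w (k + 1) 0 - w k 0 = 0 ∧ w (k + 1) 1 - w k 1 = 0)
    (hrec : ∀ k, ∀ y ∈ Set.Icc (0 : ℝ) 1,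
      (w (k + 1) y - w k y)
        - (τ / 2) * iteratedDeriv 2 (fun t => w (k + 1) t - w k t) y = -2 * w k y)
    (h0 : ∀ y ∈ Set.Icc (0 : ℝ) 1, w 0 y = 0) :
    ∀ k, ∀ y ∈ Set.Icc (0 : ℝ) 1, w k y = 0 := by
  intro k
  induction k with
  | zero => exact h0
  | succ k ih =>
    set v : ℝ → ℝ := fun t => w (k + 1) t - w k t with hvdef
    have hvC : ContDiff ℝ 2 v := (hw (k + 1)).sub (hw k)
    have hode : ∀ y ∈ Set.Icc (0 : ℝ) 1, deriv (deriv v) y = (2 / τ) * v y := by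
      intro y hy
      have h := hrec k y hy
      rw [ih y hy] at h
      have hik := ih y hy
      have h2 : iteratedDeriv 2 v y = deriv (deriv v) y := by
        rw [iteratedDeriv_succ, iteratedDeriv_one]
      have : (τ / 2) * deriv (deriv v) y = v y := by
        rw [← h2]; simp only [hvdef] at h ⊢; linarith
      field_simp at this ⊢
      linarith
    have hv0 : v 0 = 0 := (hbc k).1
    have hv1 : v 1 = 0 := (hbc k).2
    have hle : ∀ y ∈ Set.Icc (0 : ℝ) 1, v y ≤ 0 := key τ hτ v hvC hode hv0 hv1
    have hge : ∀ y ∈ Set.Icc (0 : ℝ) 1, (-v) y ≤ 0 := by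
      apply key τ hτ (-v) hvC.neg
      · intro y hy
        have : deriv (deriv (-v)) y = -deriv (deriv v) y := by
          have e1 : deriv (-v) = -deriv v := by
            funext t
            show deriv (fun x => -(v x)) t = -(deriv v t)
            exact deriv.neg
          rw [e1]
          show deriv (fun x => -(deriv v x)) y = _
          exact deriv.neg
        rw [this, hode y hy]; simp
      · simp [hv0]
      · simp [hv1]
    intro y hy
    have h1 := hle y hy
    have h2 := hge y hy
    simp only [Pi.neg_apply, neg_nonpos] at h2
    have hv : v y = 0 := le_antisymm h1 h2
    have := ih y hy
    simp only [hvdef] at hv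
    linarith
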